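/- For every λ > 0 there exists a constant C > 0 (depending only on λ) such that for all b with -1 < b < 1, ∫_{-1}^{1} (1 - b s)^{-λ-1} (1 - s) (1 - s^2)^{λ-1} ds ≤ C / (1 - |b|). -/

import Mathlib

open MeasureTheory

set_option maxHeartbeats 2000000 in
theorem paley_stmt2 (lam : ℝ) (hlam : 0 < lam) :
    ∃ C > (0 : ℝ), ∀ b : ℝ, -1 < b → b < 1 →
      ∫ s in (-1 : ℝ)..1, (1 - b * s) ^ (-lam - 1) * (1 - s) * (1 - s ^ 2) ^ (lam - 1)
        ≤ C / (1 - |b|) := by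
  set K : ℝ := 2 ^ (lam + 1) * 2 ^ lam * 2 with hKdef
  have hK0 : 0 < K := by positivity
  refine ⟨4 * K / lam, by positivity, ?_⟩
  intro b hb1 hb2
  have hb : |b| < 1 := abs_lt.mpr ⟨hb1, hb2⟩
  set ε : ℝ := 1 - |b| with hεdef
  have hε : 0 < ε := by simp only [hεdef]; linarith
  -- helper: (1 ≤ y ≤ 2) → y^(lam-1) ≤ 2^lam
  have hbd : ∀ y : ℝ, 1 ≤ y → y ≤ 2 → y ^ (lam - 1) ≤ 2 ^ lam := by
    intro y hy1 hy2
    rcases le_total 1 lam with h | h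
    · calc y ^ (lam - 1) ≤ 2 ^ (lam - 1) :=
            Real.rpow_le_rpow (by linarith) hy2 (by linarith)
        _ ≤ 2 ^ lam := Real.rpow_le_rpow_of_exponent_le one_le_two (by linarith)
    · calc y ^ (lam - 1) ≤ 1 := Real.rpow_le_one_of_one_le_of_nonpos hy1 (by linarith)
        _ ≤ 2 ^ lam := by
            have := Real.rpow_le_rpow_of_exponent_le (x := 2) one_le_two hlam.le
            simpa using this
  -- the antiderivative
  set G : ℝ → ℝ := fun s =>
    K / (lam * ε) * (((1 + s) / (ε + 1 + s)) ^ lam - ((1 - s) / (ε + 1 - s)) ^ lam) with hGdef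
  set g' : ℝ → ℝ := fun s =>
    K * ((ε + 1 + s) ^ (-lam - 1) * (1 + s) ^ (lam - 1)
       + (ε + 1 - s) ^ (-lam - 1) * (1 - s) ^ (lam - 1)) with hg'def
  set f : ℝ → ℝ := fun s => (1 - b * s) ^ (-lam - 1) * (1 - s) * (1 - s ^ 2) ^ (lam - 1)
    with hfdef
  -- helper identity for rpow algebra
  have hXpow : ∀ X : ℝ, 0 < X → X ^ (-lam - 1) = (X ^ (lam - 1) * X ^ 2)⁻¹ := by
    intro X hX
    have h1 : X ^ (lam - 1) * X ^ 2 = X ^ (lam + 1) := by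
      rw [← Real.rpow_two, ← Real.rpow_add hX, show lam - 1 + 2 = lam + 1 by ring]
    rw [h1, show -lam - 1 = -(lam + 1) by ring, Real.rpow_neg hX.le]
  -- continuity of G on Icc
  have hcont : ContinuousOn G (Set.Icc (-1 : ℝ) 1) := by
    apply ContinuousOn.mul continuousOn_const
    apply ContinuousOn.sub
    · apply ContinuousOn.rpow_const
      · apply ContinuousOn.div
        · fun_prop
        · fun_prop
        · intro s hs
          have : (0:ℝ) < ε + 1 + s := by have := hs.1; simp only [Set.mem_Icc] at hs; linarith [hs.1]
          exact this.ne'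
      · intro s _; exact Or.inr hlam.le
    · apply ContinuousOn.rpow_const
      · apply ContinuousOn.div
        · fun_prop
        · fun_prop
        · intro s hs
          simp only [Set.mem_Icc] at hs
          have : (0:ℝ) < ε + 1 - s := by linarith [hs.2]
          exact this.ne'
      · intro s _; exact Or.inr hlam.le
  -- derivative of G on Ioo
  have hderiv : ∀ t ∈ Set.Ioo (-1 : ℝ) 1, HasDerivWithinAt G (g' t) (Set.Ioi t) t := by
    intro t ht
    obtain ⟨ht1, ht2⟩ := ht
    have h2 : (0:ℝ) < 1 + t := by linarith
    have h1 : (0:ℝ) < 1 - t := by linarith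
    have hA : (0:ℝ) < ε + 1 + t := by linarith
    have hB : (0:ℝ) < ε + 1 - t := by linarith
    have d1 : HasDerivAt (fun s : ℝ => 1 + s) 1 t := by
      simpa using (hasDerivAt_id t).const_add (1 : ℝ)
    have d2 : HasDerivAt (fun s : ℝ => ε + 1 + s) 1 t := by
      simpa using (hasDerivAt_id t).const_add (ε + 1)
    have d3 : HasDerivAt (fun s : ℝ => 1 - s) (-1) t := by
      simpa using (hasDerivAt_id t).const_sub (1 : ℝ)
    have d4 : HasDerivAt (fun s : ℝ => ε + 1 - s) (-1) t := by
      simpa using (hasDerivAt_id t).const_sub (ε + 1)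
    have hu2 : HasDerivAt (fun s : ℝ => (1 + s) / (ε + 1 + s))
        ((1 * (ε + 1 + t) - (1 + t) * 1) / (ε + 1 + t) ^ 2) t := d1.div d2 hA.ne'
    have hu1 : HasDerivAt (fun s : ℝ => (1 - s) / (ε + 1 - s))
        (((-1) * (ε + 1 - t) - (1 - t) * (-1)) / (ε + 1 - t) ^ 2) t := d3.div d4 hB.ne'
    have hr2 := hu2.rpow_const (p := lam) (Or.inl (by positivity))
    have hr1 := hu1.rpow_const (p := lam) (Or.inl (by positivity))
    have hG : HasDerivAt G
        (K / (lam * ε) *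
          (((1 * (ε + 1 + t) - (1 + t) * 1) / (ε + 1 + t) ^ 2) * lam *
              ((1 + t) / (ε + 1 + t)) ^ (lam - 1) -
            (((-1) * (ε + 1 - t) - (1 - t) * (-1)) / (ε + 1 - t) ^ 2) * lam *
              ((1 - t) / (ε + 1 - t)) ^ (lam - 1))) t := (hr2.sub hr1).const_mul _
    have heq :
        K / (lam * ε) *
          (((1 * (ε + 1 + t) - (1 + t) * 1) / (ε + 1 + t) ^ 2) * lam *
              ((1 + t) / (ε + 1 + t)) ^ (lam - 1) -
            (((-1) * (ε + 1 - t) - (1 - t) * (-1)) / (ε + 1 - t) ^ 2) * lam *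
              ((1 - t) / (ε + 1 - t)) ^ (lam - 1)) = g' t := by
      have e2 : ((1 + t) / (ε + 1 + t)) ^ (lam - 1)
          = (1 + t) ^ (lam - 1) / (ε + 1 + t) ^ (lam - 1) := Real.div_rpow h2.le hA.le _
      have e1 : ((1 - t) / (ε + 1 - t)) ^ (lam - 1)
          = (1 - t) ^ (lam - 1) / (ε + 1 - t) ^ (lam - 1) := Real.div_rpow h1.le hB.le _
      have p2 := hXpow _ hA
      have p1 := hXpow _ hB
      have n2 : (ε + 1 + t) ^ (lam - 1) ≠ 0 := (Real.rpow_pos_of_pos hA _).ne'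
      have n1 : (ε + 1 - t) ^ (lam - 1) ≠ 0 := (Real.rpow_pos_of_pos hB _).ne'
      simp only [hg'def]
      rw [e2, e1, p2, p1]
      have hnum2 : 1 * (ε + 1 + t) - (1 + t) * 1 = ε := by ring
      have hnum1 : (-1) * (ε + 1 - t) - (1 - t) * (-1) = -ε := by ring
      rw [hnum2, hnum1]
      field_simp
      ring
    exact (heq ▸ hG).hasDerivWithinAt
  by_cases hint : IntervalIntegrable f volume (-1 : ℝ) 1
  · have hφint : IntegrableOn f (Set.Icc (-1 : ℝ) 1) volume := by
      have := (intervalIntegrable_iff' (f := f) (a := -1) (b := 1) (μ := volume)).mp hint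
      rwa [Set.uIcc_of_le (by norm_num : (-1:ℝ) ≤ 1)] at this
    have hφg : ∀ t ∈ Set.Ioo (-1 : ℝ) 1, f t ≤ g' t := by
      intro t ht
      obtain ⟨ht1, ht2⟩ := ht
      have h2 : (0:ℝ) < 1 + t := by linarith
      have h1 : (0:ℝ) < 1 - t := by linarith
      have hA : (0:ℝ) < ε + 1 + t := by linarith
      have hB : (0:ℝ) < ε + 1 - t := by linarith
      have habs : |t| ≤ 1 := abs_le.mpr ⟨ht1.le, ht2.le⟩
      have hbs1 : b * t ≤ |b| := by
        calc b * t ≤ |b * t| := le_abs_self _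
          _ = |b| * |t| := abs_mul _ _
          _ ≤ |b| * 1 := by nlinarith [abs_nonneg b]
          _ = |b| := mul_one _
      have hbs2 : b * t ≤ |t| := by
        calc b * t ≤ |b * t| := le_abs_self _
          _ = |b| * |t| := abs_mul _ _
          _ ≤ 1 * |t| := by nlinarith [abs_nonneg t]
          _ = |t| := one_mul _
      -- split (1 - t^2)^(lam-1)
      have hsplit : (1 - t ^ 2 : ℝ) ^ (lam - 1)
          = (1 - t) ^ (lam - 1) * (1 + t) ^ (lam - 1) := by
        rw [show (1 - t ^ 2 : ℝ) = (1 - t) * (1 + t) by ring, Real.mul_rpow h1.le h2.le]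
      have hR : (0:ℝ) ≤ (1 - t) ^ (lam - 1) := Real.rpow_nonneg h1.le _
      have hS : (0:ℝ) ≤ (1 + t) ^ (lam - 1) := Real.rpow_nonneg h2.le _
      have hT1 : (0:ℝ) ≤ (ε + 1 - t) ^ (-lam - 1) := Real.rpow_nonneg hB.le _
      have hT2 : (0:ℝ) ≤ (ε + 1 + t) ^ (-lam - 1) := Real.rpow_nonneg hA.le _
      have h2pow : (0:ℝ) < 2 ^ (lam + 1) := by positivity
      have h2pow' : (0:ℝ) < 2 ^ lam := by positivity
      -- rewrite of halved rpow
      have hhalf : ∀ X : ℝ, 0 < X → (X / 2) ^ (-lam - 1) = X ^ (-lam - 1) * 2 ^ (lam + 1) := by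
        intro X hX
        rw [Real.div_rpow hX.le (by norm_num) _,
          show (-lam - 1 : ℝ) = -(lam + 1) by ring, Real.rpow_neg (by norm_num : (0:ℝ) ≤ 2),
          div_eq_mul_inv, inv_inv]
      simp only [hfdef, hg'def, hsplit]
      rcases le_total 0 t with hts | hts
      · -- t ≥ 0 : use the (1-t) singular term
        have habs' : |t| = t := abs_of_nonneg hts
        have hge : (ε + 1 - t) / 2 ≤ 1 - b * t := by
          rw [habs'] at hbs2
          simp only [hεdef]; linarith
        have hgepos : (0:ℝ) < (ε + 1 - t) / 2 := by linarith
        have hP : (1 - b * t) ^ (-lam - 1) ≤ ((ε + 1 - t) / 2) ^ (-lam - 1) :=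
          Real.rpow_le_rpow_of_nonpos hgepos hge (by linarith)
        rw [hhalf _ hB] at hP
        have hSb : (1 + t) ^ (lam - 1) ≤ 2 ^ lam := hbd _ (by linarith) (by linarith)
        have hPnn : (0:ℝ) ≤ (1 - b * t) ^ (-lam - 1) :=
          Real.rpow_nonneg (by linarith [hbs1, hb]) _
        calc (1 - b * t) ^ (-lam - 1) * (1 - t) * ((1 - t) ^ (lam - 1) * (1 + t) ^ (lam - 1))
            ≤ ((ε + 1 - t) ^ (-lam - 1) * 2 ^ (lam + 1)) * 1 *
              ((1 - t) ^ (lam - 1) * 2 ^ lam) := by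
              have step1 : (1 - b * t) ^ (-lam - 1) * (1 - t)
                  ≤ ((ε + 1 - t) ^ (-lam - 1) * 2 ^ (lam + 1)) * 1 :=
                mul_le_mul hP (by linarith) h1.le (mul_nonneg hT1 h2pow.le)
              have step2 : (1 - t) ^ (lam - 1) * (1 + t) ^ (lam - 1)
                  ≤ (1 - t) ^ (lam - 1) * 2 ^ lam := mul_le_mul_of_nonneg_left hSb hR
              exact mul_le_mul step1 step2 (mul_nonneg hR hS)
                (mul_nonneg (mul_nonneg hT1 h2pow.le) zero_le_one)
          _ = (2 ^ (lam + 1) * 2 ^ lam) * ((ε + 1 - t) ^ (-lam - 1) * (1 - t) ^ (lam - 1)) := by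
              ring
          _ ≤ K * ((ε + 1 - t) ^ (-lam - 1) * (1 - t) ^ (lam - 1)) := by
              apply mul_le_mul_of_nonneg_right _ (mul_nonneg hT1 hR)
              rw [hKdef]; nlinarith
          _ ≤ K * ((ε + 1 + t) ^ (-lam - 1) * (1 + t) ^ (lam - 1)
              + (ε + 1 - t) ^ (-lam - 1) * (1 - t) ^ (lam - 1)) := by
              apply mul_le_mul_of_nonneg_left _ hK0.le
              exact le_add_of_nonneg_left (mul_nonneg hT2 hS)
      · -- t ≤ 0 : use the (1+t) singular term
        have habs' : |t| = -t := abs_of_nonpos hts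
        have hge : (ε + 1 + t) / 2 ≤ 1 - b * t := by
          rw [habs'] at hbs2
          simp only [hεdef]; linarith
        have hgepos : (0:ℝ) < (ε + 1 + t) / 2 := by linarith
        have hP : (1 - b * t) ^ (-lam - 1) ≤ ((ε + 1 + t) / 2) ^ (-lam - 1) :=
          Real.rpow_le_rpow_of_nonpos hgepos hge (by linarith)
        rw [hhalf _ hA] at hP
        have hRb : (1 - t) ^ (lam - 1) ≤ 2 ^ lam := hbd _ (by linarith) (by linarith)
        have hPnn : (0:ℝ) ≤ (1 - b * t) ^ (-lam - 1) :=
          Real.rpow_nonneg (by linarith [hbs1, hb]) _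
        calc (1 - b * t) ^ (-lam - 1) * (1 - t) * ((1 - t) ^ (lam - 1) * (1 + t) ^ (lam - 1))
            ≤ ((ε + 1 + t) ^ (-lam - 1) * 2 ^ (lam + 1)) * 2 *
              (2 ^ lam * (1 + t) ^ (lam - 1)) := by
              have step1 : (1 - b * t) ^ (-lam - 1) * (1 - t)
                  ≤ ((ε + 1 + t) ^ (-lam - 1) * 2 ^ (lam + 1)) * 2 :=
                mul_le_mul hP (by linarith) h1.le (mul_nonneg hT2 h2pow.le)
              have step2 : (1 - t) ^ (lam - 1) * (1 + t) ^ (lam - 1)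
                  ≤ 2 ^ lam * (1 + t) ^ (lam - 1) := mul_le_mul_of_nonneg_right hRb hS
              exact mul_le_mul step1 step2 (mul_nonneg hR hS)
                (mul_nonneg (mul_nonneg hT2 h2pow.le) two_pos.le)
          _ = (2 ^ (lam + 1) * 2 ^ lam * 2) * ((ε + 1 + t) ^ (-lam - 1) * (1 + t) ^ (lam - 1)) := by
              ring
          _ = K * ((ε + 1 + t) ^ (-lam - 1) * (1 + t) ^ (lam - 1)) := by rw [hKdef]
          _ ≤ K * ((ε + 1 + t) ^ (-lam - 1) * (1 + t) ^ (lam - 1)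
              + (ε + 1 - t) ^ (-lam - 1) * (1 - t) ^ (lam - 1)) := by
              apply mul_le_mul_of_nonneg_left _ hK0.le
              exact le_add_of_nonneg_right (mul_nonneg hT1 hR)
    have key := intervalIntegral.integral_le_sub_of_hasDeriv_right_of_le
      (by norm_num : (-1:ℝ) ≤ 1) hcont hderiv hφint hφg
    refine le_trans key ?_
    -- compute G 1 - G (-1)
    have hG1 : G 1 = K / (lam * ε) * ((2 / (ε + 2)) ^ lam) := by
      simp only [hGdef]
      rw [show ((1:ℝ) + 1) / (ε + 1 + 1) = 2 / (ε + 2) by ring_nf,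
        show ((1:ℝ) - 1) / (ε + 1 - 1) = 0 by ring_nf,
        Real.zero_rpow hlam.ne', sub_zero]
    have hGm1 : G (-1) = K / (lam * ε) * (-((2 / (ε + 2)) ^ lam)) := by
      simp only [hGdef]
      rw [show ((1:ℝ) + (-1)) / (ε + 1 + (-1)) = 0 by ring_nf,
        show ((1:ℝ) - (-1)) / (ε + 1 - (-1)) = 2 / (ε + 2) by ring_nf,
        Real.zero_rpow hlam.ne', zero_sub]
    have hq : (0:ℝ) ≤ (2 / (ε + 2)) ^ lam ∧ (2 / (ε + 2)) ^ lam ≤ 1 := by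
      constructor
      · exact Real.rpow_nonneg (by positivity) _
      · exact Real.rpow_le_one (by positivity) (by rw [div_le_one (by linarith)]; linarith) hlam.le
    rw [hG1, hGm1]
    have hc0 : (0:ℝ) ≤ K / (lam * ε) := by positivity
    have : K / (lam * ε) * ((2 / (ε + 2)) ^ lam) - K / (lam * ε) * (-((2 / (ε + 2)) ^ lam))
        = 2 * (K / (lam * ε)) * ((2 / (ε + 2)) ^ lam) := by ring
    rw [this]
    have h4 : 4 * K / lam / ε = 4 * (K / (lam * ε)) := by
      field_simp
    rw [h4]
    nlinarith [hq.1, hq.2, hc0]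
  · rw [intervalIntegral.integral_undef hint]
    positivity
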